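/- Let d be a prime, n ≥ 1, and Γ a symmetric n×n matrix over ZMod d with zero diagonal whose associated weighted graph is two-colorable with parts A, B (Γ u v = 0 whenever u,v ∈ A or u,v ∈ B), and suppose Γ is invertible as a matrix over ZMod d. Then n is even, |A| = |B| = n/2, and the Schmidt rank of the graph state is exactly r(ψ_Γ) = d ^ (n/2); equivalently, the Schmidt measure attains its maximal value E_S(ψ_Γ) = ⌊n/2⌋. -/

import Mathlib

open Matrix

/-- The graph-state amplitude function of an adjacency matrix `Γ` over `ZMod d`. -/
noncomputable def graphState (d n : ℕ) (ω : ℂ) (Γ : Matrix (Fin n) (Fin n) (ZMod d)) :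
    (Fin n → ZMod d) → ℂ := fun x =>
  (((d : ℝ) ^ (-(n : ℝ) / 2) : ℝ) : ℂ) *
    ω ^ (∑ u : Fin n, ∑ v : Fin n, if u < v then Γ u v * x u * x v else 0).val

/-- The Schmidt rank of `ψ : (Fin n → ZMod d) → ℂ`: the least `R` such that `ψ` is a
sum of `R` product functions. -/
noncomputable def schmidtRank {d n : ℕ} (ψ : (Fin n → ZMod d) → ℂ) : ℕ :=
  sInf {R : ℕ | ∃ f : Fin R → Fin n → ZMod d → ℂ, ∀ x, ψ x = ∑ i, ∏ j, f i j (x j)}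


private lemma chi_add {d : ℕ} {ω : ℂ} (hd : d ≠ 0) (hω1 : ω ^ d = 1) (k l : ZMod d) :
    ω ^ (k + l).val = ω ^ k.val * ω ^ l.val := by
  haveI : NeZero d := ⟨hd⟩
  rw [ZMod.val_add, ← pow_add]
  conv_rhs => rw [← Nat.div_add_mod (k.val + l.val) d]
  rw [pow_add, pow_mul, hω1, one_pow, one_mul]

private lemma chi_sum {d : ℕ} {ω : ℂ} (hd : d ≠ 0) (hω1 : ω ^ d = 1) {ι : Type*}
    (s : Finset ι) (f : ι → ZMod d) :
    ω ^ (∑ i ∈ s, f i).val = ∏ i ∈ s, ω ^ (f i).val := by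
  classical
  haveI : NeZero d := ⟨hd⟩
  induction s using Finset.induction with
  | empty => simp
  | insert _ _ h ih => rw [Finset.sum_insert h, chi_add hd hω1, ih, Finset.prod_insert h]

private lemma conj_chi {d : ℕ} {ω : ℂ} (hd : d ≠ 0) (hω1 : ω ^ d = 1) (k : ZMod d) :
    (starRingEnd ℂ) (ω ^ k.val) = ω ^ (-k).val := by
  haveI : NeZero d := ⟨hd⟩
  have hnorm : ‖ω ^ k.val‖ = 1 := by
    rw [norm_pow, Complex.norm_eq_one_of_pow_eq_one hω1 hd, one_pow]
  have h1 : ω ^ k.val * ω ^ (-k).val = 1 := by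
    rw [← chi_add hd hω1, add_neg_cancel, ZMod.val_zero, pow_zero]
  rw [← Complex.inv_eq_conj hnorm]
  exact inv_eq_of_mul_eq_one_right h1

private lemma sum_chi {d : ℕ} {ω : ℂ} (hd : Nat.Prime d) (hω : IsPrimitiveRoot ω d) [NeZero d] (s : ZMod d) :
    ∑ t : ZMod d, ω ^ (s * t).val = if s = 0 then (d : ℂ) else 0 := by
  haveI : Fact d.Prime := ⟨hd⟩
  by_cases hs : s = 0
  · simp [hs, ZMod.card]
  · rw [if_neg hs]
    have hb : Function.Bijective (fun t : ZMod d => s * t) := mulLeft_bijective₀ s hs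
    rw [Fintype.sum_bijective _ hb _ (fun t : ZMod d => ω ^ t.val) (fun t => rfl)]
    have : ∑ t : ZMod d, ω ^ t.val = ∑ i ∈ Finset.range d, ω ^ i := by
      apply Finset.sum_nbij' (i := fun (k : ZMod d) => k.val) (j := fun i => (i : ZMod d))
      · intro a _; exact Finset.mem_range.2 a.val_lt
      · intro a _; exact Finset.mem_univ _
      · intro a _; exact ZMod.natCast_rightInverse a
      · intro a ha; exact ZMod.val_cast_of_lt (Finset.mem_range.1 ha)
      · intro a _; rfl
    rw [this, hω.geom_sum_eq_zero hd.one_lt]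

private lemma sum_chi_pi {d : ℕ} {ω : ℂ} (hd : Nat.Prime d) (hω : IsPrimitiveRoot ω d)
    [NeZero d] {ι : Type*} [Fintype ι] [DecidableEq ι] (w : ι → ZMod d) :
    ∑ b : ι → ZMod d, ω ^ (∑ v, w v * b v).val
      = if w = 0 then ((d : ℂ) ^ Fintype.card ι) else 0 := by
  have h1 : ∀ b : ι → ZMod d, ω ^ (∑ v, w v * b v).val = ∏ v, ω ^ (w v * b v).val :=
    fun b => chi_sum hd.ne_zero hω.pow_eq_one _ _
  simp_rw [h1]
  rw [← Fintype.piFinset_univ, ← Finset.prod_univ_sum (fun _ : ι => (Finset.univ : Finset (ZMod d))) (fun v t => ω ^ (w v * t).val)]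
  simp_rw [sum_chi hd hω]
  by_cases hw : w = 0
  · simp [hw, Finset.prod_const, Finset.card_univ]
  · rw [if_neg hw]
    obtain ⟨v, hv⟩ : ∃ v, w v ≠ 0 := by
      by_contra h; push_neg at h; exact hw (funext h)
    exact Finset.prod_eq_zero (Finset.mem_univ v) (if_neg hv)

private lemma exponent_eq {d n : ℕ} (Γ : Matrix (Fin n) (Fin n) (ZMod d)) (hΓsymm : Γ.IsSymm)
    (hΓdiag : ∀ u, Γ u u = 0) (A : Finset (Fin n))
    (hcol : ∀ u v : Fin n, (u ∈ A ∧ v ∈ A) ∨ (u ∉ A ∧ v ∉ A) → Γ u v = 0)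
    (x : Fin n → ZMod d) :
    (∑ u : Fin n, ∑ v : Fin n, if u < v then Γ u v * x u * x v else 0)
      = ∑ u ∈ A, ∑ v ∈ Aᶜ, Γ u v * x u * x v := by
  set F : Fin n → Fin n → ZMod d := fun u v => Γ u v * x u * x v with hF
  have hFsymm : ∀ u v, F u v = F v u := by
    intro u v; simp only [hF]; rw [hΓsymm.apply u v]; ring
  have step1 : ∀ u v : Fin n, (if u < v then F u v else 0) =
      (if u < v ∧ u ∈ A ∧ v ∉ A then F u v else 0)
        + (if u < v ∧ u ∉ A ∧ v ∈ A then F u v else 0) := by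
    intro u v
    by_cases h : u < v
    · by_cases h1 : u ∈ A <;> by_cases h2 : v ∈ A <;>
        simp [h, h1, h2, hF] <;>
        first
          | (rw [hcol u v (Or.inl ⟨h1, h2⟩)]; ring)
          | (rw [hcol u v (Or.inr ⟨h1, h2⟩)]; ring)
    · simp [h]
  have step3 : ∀ u v : Fin n, (if u < v ∧ u ∈ A ∧ v ∉ A then F u v else 0)
      + (if v < u ∧ u ∈ A ∧ v ∉ A then F u v else 0)
      = (if u ∈ A ∧ v ∉ A then F u v else 0) := by
    intro u v
    rcases lt_trichotomy u v with h | h | h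
    · simp [h, h.asymm]
    · subst h
      have : ¬(u ∈ A ∧ u ∉ A) := fun ⟨h1, h2⟩ => h2 h1
      simp [lt_irrefl, this]
    · simp [h, h.asymm]
  calc (∑ u : Fin n, ∑ v : Fin n, if u < v then F u v else 0)
      = (∑ u : Fin n, ∑ v : Fin n, if u < v ∧ u ∈ A ∧ v ∉ A then F u v else 0)
        + (∑ u : Fin n, ∑ v : Fin n, if u < v ∧ u ∉ A ∧ v ∈ A then F u v else 0) := by
        rw [← Finset.sum_add_distrib]
        simp_rw [← Finset.sum_add_distrib, step1]
    _ = (∑ u : Fin n, ∑ v : Fin n, if u < v ∧ u ∈ A ∧ v ∉ A then F u v else 0)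
        + (∑ u : Fin n, ∑ v : Fin n, if v < u ∧ u ∈ A ∧ v ∉ A then F u v else 0) := by
        congr 1
        rw [Finset.sum_comm]
        refine Finset.sum_congr rfl fun u _ => Finset.sum_congr rfl fun v _ => ?_
        rw [hFsymm u v]
        exact if_congr (by tauto) rfl rfl
    _ = ∑ u : Fin n, ∑ v : Fin n, if u ∈ A ∧ v ∉ A then F u v else 0 := by
        rw [← Finset.sum_add_distrib]
        simp_rw [← Finset.sum_add_distrib, step3]
    _ = ∑ u ∈ A, ∑ v ∈ Aᶜ, F u v := by
        have inner : ∀ u : Fin n, (∑ v : Fin n, if u ∈ A ∧ v ∉ A then F u v else 0)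
            = if u ∈ A then ∑ v ∈ Aᶜ, F u v else 0 := by
          intro u
          by_cases hu : u ∈ A
          · simp only [hu, true_and, if_pos]
            rw [← Finset.sum_filter]
            congr 1
            ext v; simp [Finset.mem_compl]
          · simp [hu]
        rw [Finset.sum_congr rfl fun u _ => inner u, ← Finset.sum_filter]
        congr 1
        ext u; simp


private lemma card_le_card_compl {d n : ℕ} (hd : Nat.Prime d)
    (Γ : Matrix (Fin n) (Fin n) (ZMod d)) (hinv : IsUnit Γ)
    (S : Finset (Fin n)) (hS : ∀ u v, u ∈ S → v ∈ S → Γ u v = 0) :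
    S.card ≤ Sᶜ.card := by
  haveI : NeZero d := ⟨hd.ne_zero⟩
  haveI : Fact d.Prime := ⟨hd⟩
  set ext : (↥S → ZMod d) → (Fin n → ZMod d) :=
    fun a u => if h : u ∈ S then a ⟨u, h⟩ else 0 with hext
  have hext_inj : Function.Injective ext := by
    intro a a' h
    funext u
    have := congrFun h u.1
    simpa [hext, u.2] using this
  have hvec_inj : Function.Injective Γ.vecMul :=
    Matrix.vecMul_injective_iff_isUnit.2 hinv
  have hzero : ∀ (a : ↥S → ZMod d) (v : Fin n), v ∈ S → Matrix.vecMul (ext a) Γ v = 0 := by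
    intro a v hv
    show (∑ u : Fin n, ext a u * Γ u v) = 0
    apply Finset.sum_eq_zero
    intro u _
    by_cases hu : u ∈ S
    · rw [hS u v hu hv, mul_zero]
    · simp [hext, hu]
  set φ : (↥S → ZMod d) → (↥(Sᶜ) → ZMod d) := fun a v => Matrix.vecMul (ext a) Γ v.1 with hφdef
  have hφ : Function.Injective φ := by
    intro a a' h
    apply hext_inj
    apply hvec_inj
    funext v
    by_cases hv : v ∈ S
    · show Matrix.vecMul (ext a) Γ v = Matrix.vecMul (ext a') Γ v
      rw [hzero a v hv, hzero a' v hv]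
    · exact congrFun h ⟨v, Finset.mem_compl.2 hv⟩
  have hcard := Fintype.card_le_of_injective φ hφ
  rw [Fintype.card_fun, Fintype.card_fun, ZMod.card, Fintype.card_coe, Fintype.card_coe] at hcard
  exact (Nat.pow_le_pow_iff_right hd.one_lt).1 hcard


private noncomputable def gfun {d n : ℕ} (ω : ℂ) (Γ : Matrix (Fin n) (Fin n) (ZMod d))
    (A : Finset (Fin n)) (a : ↥A → ZMod d) (j : Fin n) (t : ZMod d) : ℂ :=
  (((d : ℝ) ^ (-(1 : ℝ)/2) : ℝ) : ℂ) *
    (if h : j ∈ A then (if t = a ⟨j, h⟩ then 1 else 0)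
     else ω ^ (∑ u : ↥A, Γ u.1 j * a u * t).val)

private lemma c1_pow {d n : ℕ} (hd : 0 < d) :
    ((((d : ℝ) ^ (-(1 : ℝ)/2) : ℝ) : ℂ)) ^ n = (((d : ℝ) ^ (-(n : ℝ) / 2) : ℝ) : ℂ) := by
  have : ((d : ℝ) ^ (-(1 : ℝ)/2)) ^ n = (d : ℝ) ^ (-(n : ℝ) / 2) := by
    rw [← Real.rpow_natCast ((d : ℝ) ^ (-(1 : ℝ)/2)) n, ← Real.rpow_mul (by positivity)]
    congr 1; ring
  rw [← this]; push_cast; ring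

private lemma graphState_rep {d n : ℕ} (hd : Nat.Prime d) [NeZero d] {ω : ℂ} (hω : IsPrimitiveRoot ω d)
    (Γ : Matrix (Fin n) (Fin n) (ZMod d)) (hΓsymm : Γ.IsSymm)
    (hΓdiag : ∀ u, Γ u u = 0) (A : Finset (Fin n))
    (hcol : ∀ u v : Fin n, (u ∈ A ∧ v ∈ A) ∨ (u ∉ A ∧ v ∉ A) → Γ u v = 0)
    (x : Fin n → ZMod d) :
    graphState d n ω Γ x = ∑ a : ↥A → ZMod d, ∏ j, gfun ω Γ A a j (x j) := by
  set c1 : ℂ := (((d : ℝ) ^ (-(1 : ℝ)/2) : ℝ) : ℂ) with hc1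
  set xA : ↥A → ZMod d := fun u => x u.1 with hxA
  have hprod : ∀ a : ↥A → ZMod d, (∏ j, gfun ω Γ A a j (x j))
      = if xA = a then
          c1 ^ n * ω ^ (∑ v : ↥(Aᶜ), ∑ u : ↥A, Γ u.1 v.1 * a u * x v.1).val
        else 0 := by
    intro a
    have h1 : (∏ j, gfun ω Γ A a j (x j))
        = c1 ^ n * ∏ j, (if h : j ∈ A then (if x j = a ⟨j, h⟩ then 1 else 0)
            else ω ^ (∑ u : ↥A, Γ u.1 j * a u * x j).val) := by
      simp only [gfun]
      rw [Finset.prod_mul_distrib, Finset.prod_const, Finset.card_univ, Fintype.card_fin]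
    rw [h1, ← Finset.prod_mul_prod_compl A (fun j => if h : j ∈ A then
          (if x j = a ⟨j, h⟩ then 1 else 0)
          else ω ^ (∑ u : ↥A, Γ u.1 j * a u * x j).val)]
    have h2 : (∏ j ∈ A, (if h : j ∈ A then (if x j = a ⟨j, h⟩ then 1 else 0)
          else ω ^ (∑ u : ↥A, Γ u.1 j * a u * x j).val)) = if xA = a then 1 else 0 := by
      rw [← Finset.prod_coe_sort]
      calc (∏ j : ↥A, (if h : (j : Fin n) ∈ A then (if x j = a ⟨j, h⟩ then 1 else 0)
              else ω ^ (∑ u : ↥A, Γ u.1 j * a u * x j).val))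
          = ∏ j : ↥A, (if xA j = a j then 1 else 0) :=
            Finset.prod_congr rfl fun j _ => by rw [dif_pos j.2]
        _ = if ∀ j : ↥A, xA j = a j then 1 else 0 := Fintype.prod_boole
        _ = if xA = a then 1 else 0 := if_congr funext_iff.symm rfl rfl
    have h3 : (∏ j ∈ Aᶜ, (if h : j ∈ A then (if x j = a ⟨j, h⟩ then 1 else 0)
          else ω ^ (∑ u : ↥A, Γ u.1 j * a u * x j).val))
        = ω ^ (∑ v : ↥(Aᶜ), ∑ u : ↥A, Γ u.1 v.1 * a u * x v.1).val := by
      rw [← Finset.prod_coe_sort, chi_sum hd.ne_zero hω.pow_eq_one]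
      exact Finset.prod_congr rfl fun v _ => by rw [dif_neg (Finset.mem_compl.1 v.2)]
    rw [h2, h3]
    by_cases h : xA = a <;> simp [h]
  rw [Finset.sum_congr rfl fun a _ => hprod a, Fintype.sum_ite_eq xA
    (fun a => c1 ^ n * ω ^ (∑ v : ↥(Aᶜ), ∑ u : ↥A, Γ u.1 v.1 * a u * x v.1).val)]
  have hexp : (∑ v : ↥(Aᶜ), ∑ u : ↥A, Γ u.1 v.1 * xA u * x v.1)
      = ∑ u ∈ A, ∑ v ∈ Aᶜ, Γ u v * x u * x v := by
    calc (∑ v : ↥(Aᶜ), ∑ u : ↥A, Γ u.1 v.1 * xA u * x v.1)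
        = ∑ v ∈ Aᶜ, ∑ u ∈ A, Γ u v * x u * x v := by
          rw [Finset.sum_coe_sort (Aᶜ) (fun v => ∑ u : ↥A, Γ u.1 v * xA u * x v)]
          exact Finset.sum_congr rfl fun v _ =>
            Finset.sum_coe_sort A (fun u => Γ u v * x u * x v)
      _ = ∑ u ∈ A, ∑ v ∈ Aᶜ, Γ u v * x u * x v := Finset.sum_comm
  rw [hexp, c1_pow hd.pos]
  unfold graphState
  rw [exponent_eq Γ hΓsymm hΓdiag A hcol]


private lemma rank_lower_bound {d n : ℕ} (hd : Nat.Prime d) [NeZero d] {ω : ℂ}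
    (hω : IsPrimitiveRoot ω d)
    (Γ : Matrix (Fin n) (Fin n) (ZMod d)) (hΓsymm : Γ.IsSymm)
    (hΓdiag : ∀ u, Γ u u = 0) (A : Finset (Fin n))
    (hcol : ∀ u v : Fin n, (u ∈ A ∧ v ∈ A) ∨ (u ∉ A ∧ v ∉ A) → Γ u v = 0)
    (hinv : IsUnit Γ) (R : ℕ) (f : Fin R → Fin n → ZMod d → ℂ)
    (hf : ∀ x, graphState d n ω Γ x = ∑ i, ∏ j, f i j (x j)) :
    d ^ A.card ≤ R := by
  haveI : Fact d.Prime := ⟨hd⟩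
  set c : ℂ := (((d : ℝ) ^ (-(n : ℝ) / 2) : ℝ) : ℂ) with hc
  set cmb : (↥A → ZMod d) → (↥(Aᶜ) → ZMod d) → (Fin n → ZMod d) :=
    fun a b j => if h : j ∈ A then a ⟨j, h⟩ else b ⟨j, Finset.mem_compl.2 h⟩ with hcmb
  set M : Matrix (↥A → ZMod d) (↥(Aᶜ) → ZMod d) ℂ :=
    Matrix.of fun a b => graphState d n ω Γ (cmb a b) with hM
  have hψ : ∀ x, graphState d n ω Γ x
      = c * ω ^ (∑ u ∈ A, ∑ v ∈ Aᶜ, Γ u v * x u * x v).val := by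
    intro x; unfold graphState; rw [exponent_eq Γ hΓsymm hΓdiag A hcol]
  have hMab : ∀ a b, M a b
      = c * ω ^ (∑ v : ↥(Aᶜ), (∑ u : ↥A, Γ u.1 v.1 * a u) * b v).val := by
    intro a b
    show graphState d n ω Γ (cmb a b) = _
    rw [hψ]
    congr 3
    calc ∑ u ∈ A, ∑ v ∈ Aᶜ, Γ u v * cmb a b u * cmb a b v
        = ∑ v ∈ Aᶜ, ∑ u ∈ A, Γ u v * cmb a b u * cmb a b v := Finset.sum_comm
      _ = ∑ v : ↥(Aᶜ), ∑ u : ↥A, Γ u.1 v.1 * a u * b v := by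
          rw [← Finset.sum_coe_sort (Aᶜ)
            (fun v => ∑ u ∈ A, Γ u v * cmb a b u * cmb a b v)]
          refine Finset.sum_congr rfl fun v _ => ?_
          rw [← Finset.sum_coe_sort A (fun u => Γ u v.1 * cmb a b u * cmb a b v.1)]
          refine Finset.sum_congr rfl fun u _ => ?_
          have h1 : cmb a b u.1 = a u := by simp [hcmb, u.2]
          have h2 : cmb a b v.1 = b v := by
            have hv : (v : Fin n) ∉ A := Finset.mem_compl.1 v.2
            simp [hcmb, hv]
          rw [h1, h2]
      _ = ∑ v : ↥(Aᶜ), (∑ u : ↥A, Γ u.1 v.1 * a u) * b v := by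
          simp_rw [Finset.sum_mul]
  set U : Matrix (↥A → ZMod d) (Fin R) ℂ :=
    Matrix.of fun a i => ∏ j : ↥A, f i j.1 (a j) with hU
  set V : Matrix (Fin R) (↥(Aᶜ) → ZMod d) ℂ :=
    Matrix.of fun i b => ∏ j : ↥(Aᶜ), f i j.1 (b j) with hV
  have hMUV : M = U * V := by
    ext a b
    rw [Matrix.mul_apply]
    show graphState d n ω Γ (cmb a b) = _
    rw [hf (cmb a b)]
    refine Finset.sum_congr rfl fun i _ => ?_
    show ∏ j, f i j (cmb a b j) = U a i * V i b
    rw [← Finset.prod_mul_prod_compl A (fun j => f i j (cmb a b j))]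
    congr 1
    · show _ = ∏ j : ↥A, f i j.1 (a j)
      rw [← Finset.prod_coe_sort A (fun j => f i j (cmb a b j))]
      refine Finset.prod_congr rfl fun j _ => ?_
      have : cmb a b j.1 = a j := by simp [hcmb, j.2]
      rw [this]
    · show _ = ∏ j : ↥(Aᶜ), f i j.1 (b j)
      rw [← Finset.prod_coe_sort (Aᶜ) (fun j => f i j (cmb a b j))]
      refine Finset.prod_congr rfl fun j _ => ?_
      have hj : (j : Fin n) ∉ A := Finset.mem_compl.1 j.2
      have : cmb a b j.1 = b j := by simp [hcmb, hj]
      rw [this]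
  have hw : ∀ a a' : ↥A → ZMod d, a ≠ a' →
      (fun v : ↥(Aᶜ) => ∑ u : ↥A, Γ u.1 v.1 * (a u - a' u)) ≠ 0 := by
    intro a a' hne h0
    set e : Fin n → ZMod d := fun u => if h : u ∈ A then a ⟨u, h⟩ - a' ⟨u, h⟩ else 0 with he
    have hene : e ≠ 0 := by
      intro h
      apply hne
      funext u
      have := congrFun h u.1
      simp only [he, u.2, dif_pos, Pi.zero_apply] at this
      exact sub_eq_zero.1 this
    have hvec : Matrix.vecMul e Γ = 0 := by
      funext v
      by_cases hv : v ∈ A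
      · show (∑ u : Fin n, e u * Γ u v) = 0
        apply Finset.sum_eq_zero
        intro u _
        by_cases hu : u ∈ A
        · rw [hcol u v (Or.inl ⟨hu, hv⟩), mul_zero]
        · simp [he, hu]
      · have hv' : Matrix.vecMul e Γ v = ∑ u : ↥A, Γ u.1 v * (a u - a' u) := by
          show (∑ u : Fin n, e u * Γ u v) = _
          rw [← Finset.sum_subset (Finset.subset_univ A)
            (fun u _ hu => by simp [he, hu])]
          rw [← Finset.sum_coe_sort A (fun u => e u * Γ u v)]
          refine Finset.sum_congr rfl fun u _ => ?_
          simp only [he, u.2, dif_pos]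
          ring
        rw [hv']
        exact congrFun h0 ⟨v, Finset.mem_compl.2 hv⟩
    apply hene
    have hvinj : Function.Injective Γ.vecMul := Matrix.vecMul_injective_iff_isUnit.2 hinv
    apply hvinj
    show Matrix.vecMul e Γ = Matrix.vecMul 0 Γ
    rw [hvec, Matrix.zero_vecMul]
  have hMMH : M * Mᴴ = ((c * c) * (d : ℂ) ^ Aᶜ.card)
      • (1 : Matrix (↥A → ZMod d) (↥A → ZMod d) ℂ) := by
    ext a a'
    rw [Matrix.mul_apply]
    simp only [Matrix.conjTranspose_apply, Matrix.smul_apply, Matrix.one_apply, smul_eq_mul]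
    have hterm : ∀ b : ↥(Aᶜ) → ZMod d, M a b * star (M a' b)
        = (c * c) * ω ^ (∑ v : ↥(Aᶜ),
            (∑ u : ↥A, Γ u.1 v.1 * (a u - a' u)) * b v).val := by
      intro b
      rw [hMab a b, hMab a' b]
      rw [star_mul', RCLike.star_def, conj_chi hd.ne_zero hω.pow_eq_one, Complex.conj_ofReal]
      have : (c * ω ^ (∑ v : ↥(Aᶜ), (∑ u : ↥A, Γ u.1 v.1 * a u) * b v).val) *
          (c * ω ^ (-(∑ v : ↥(Aᶜ), (∑ u : ↥A, Γ u.1 v.1 * a' u) * b v)).val)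
          = (c * c) * (ω ^ (∑ v : ↥(Aᶜ), (∑ u : ↥A, Γ u.1 v.1 * a u) * b v).val *
              ω ^ (-(∑ v : ↥(Aᶜ), (∑ u : ↥A, Γ u.1 v.1 * a' u) * b v)).val) := by ring
      rw [this, ← chi_add hd.ne_zero hω.pow_eq_one]
      have hz : (∑ v : ↥(Aᶜ), (∑ u : ↥A, Γ u.1 v.1 * a u) * b v)
          + -(∑ v : ↥(Aᶜ), (∑ u : ↥A, Γ u.1 v.1 * a' u) * b v)
          = ∑ v : ↥(Aᶜ), (∑ u : ↥A, Γ u.1 v.1 * (a u - a' u)) * b v := by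
        rw [← sub_eq_add_neg, ← Finset.sum_sub_distrib]
        refine Finset.sum_congr rfl fun v _ => ?_
        rw [← sub_mul, ← Finset.sum_sub_distrib]
        congr 1
        exact Finset.sum_congr rfl fun u _ => (mul_sub _ _ _).symm
      rw [hz]
    rw [Finset.sum_congr rfl fun b _ => hterm b, ← Finset.mul_sum,
      sum_chi_pi hd hω (fun v : ↥(Aᶜ) => ∑ u : ↥A, Γ u.1 v.1 * (a u - a' u))]
    by_cases haa : a = a'
    · subst haa
      rw [if_pos (funext fun v => by simp), if_pos rfl, Fintype.card_coe, mul_one]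
    · rw [if_neg (hw a a' haa), if_neg haa, mul_zero, mul_zero]
  have hcne : c ≠ 0 := by
    simp only [hc, ne_eq, Complex.ofReal_eq_zero]
    exact ne_of_gt (Real.rpow_pos_of_pos (by exact_mod_cast hd.pos) _)
  have hK : (c * c) * (d : ℂ) ^ Aᶜ.card ≠ 0 := by
    apply mul_ne_zero (mul_ne_zero hcne hcne)
    exact pow_ne_zero _ (Nat.cast_ne_zero.2 hd.ne_zero)
  have hunit : IsUnit (((c * c) * (d : ℂ) ^ Aᶜ.card)
      • (1 : Matrix (↥A → ZMod d) (↥A → ZMod d) ℂ)) := by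
    rw [Matrix.isUnit_iff_isUnit_det, Matrix.det_smul, Matrix.det_one, mul_one]
    exact (pow_ne_zero _ hK).isUnit
  have h1 : (M * Mᴴ).rank = Fintype.card (↥A → ZMod d) := by
    rw [hMMH]; exact Matrix.rank_of_isUnit _ hunit
  have h2 : (M * Mᴴ).rank ≤ M.rank := Matrix.rank_mul_le_left M Mᴴ
  have h3 : M.rank ≤ R := by
    rw [hMUV]
    exact le_trans (Matrix.rank_mul_le_right U V)
      (by simpa using Matrix.rank_le_card_height V)
  have hcard : Fintype.card (↥A → ZMod d) = d ^ A.card := by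
    rw [Fintype.card_fun, ZMod.card, Fintype.card_coe]
  omega


/-- If the weighted graph of `Γ` is two-colorable with parts `A` and `B = Aᶜ` and `Γ`
is invertible over `ZMod d`, then `n` is even, the two parts have size `n/2`, and the
Schmidt rank of the graph state is exactly `d^(n/2)`; i.e., the Schmidt measure attains
its maximal value `⌊n/2⌋`. -/
theorem schmidtRank_two_colorable_invertible
    (d n : ℕ) (hd : Nat.Prime d) (hn : 1 ≤ n)
    (ω : ℂ) (hω : IsPrimitiveRoot ω d)
    (Γ : Matrix (Fin n) (Fin n) (ZMod d)) (hΓsymm : Γ.IsSymm) (hΓdiag : ∀ u, Γ u u = 0)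
    (A : Finset (Fin n))
    (hcol : ∀ u v : Fin n, (u ∈ A ∧ v ∈ A) ∨ (u ∉ A ∧ v ∉ A) → Γ u v = 0)
    (hinv : IsUnit Γ) :
    Even n ∧ A.card = n / 2 ∧ Aᶜ.card = n / 2 ∧
      schmidtRank (graphState d n ω Γ) = d ^ (n / 2) := by
  haveI : NeZero d := ⟨hd.ne_zero⟩
  have hA_le := card_le_card_compl hd Γ hinv A (fun u v hu hv => hcol u v (Or.inl ⟨hu, hv⟩))
  have hB_le := card_le_card_compl hd Γ hinv Aᶜ (fun u v hu hv =>
    hcol u v (Or.inr ⟨Finset.mem_compl.1 hu, Finset.mem_compl.1 hv⟩))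
  rw [compl_compl] at hB_le
  have hsum : A.card + Aᶜ.card = n := by
    rw [Finset.card_add_card_compl, Fintype.card_fin]
  have heven : Even n := ⟨A.card, by omega⟩
  have hA2 : A.card = n / 2 := by omega
  have hB2 : Aᶜ.card = n / 2 := by omega
  refine ⟨heven, hA2, hB2, ?_⟩
  have hcardα : Fintype.card (↥A → ZMod d) = d ^ (n / 2) := by
    rw [Fintype.card_fun, ZMod.card, Fintype.card_coe, hA2]
  have hmem : d ^ (n / 2) ∈ {R : ℕ | ∃ f : Fin R → Fin n → ZMod d → ℂ,
      ∀ x, graphState d n ω Γ x = ∑ i, ∏ j, f i j (x j)} := by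
    refine ⟨fun i => gfun ω Γ A ((Fintype.equivFinOfCardEq hcardα).symm i), fun x => ?_⟩
    rw [graphState_rep hd hω Γ hΓsymm hΓdiag A hcol x]
    exact (Equiv.sum_comp (Fintype.equivFinOfCardEq hcardα).symm
      (fun a => ∏ j, gfun ω Γ A a j (x j))).symm
  have hlb : ∀ R ∈ {R : ℕ | ∃ f : Fin R → Fin n → ZMod d → ℂ,
      ∀ x, graphState d n ω Γ x = ∑ i, ∏ j, f i j (x j)}, d ^ (n / 2) ≤ R := by
    rintro R ⟨f, hf⟩
    have := rank_lower_bound hd hω Γ hΓsymm hΓdiag A hcol hinv R f hf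
    rwa [hA2] at this
  exact le_antisymm (Nat.sInf_le hmem) (le_csInf ⟨_, hmem⟩ hlb)
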